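/- Stationary-defender blocking invariant: let (α_t)_{t∈ℕ} be a play, let D' ⊆ R be a set of agents that never move (α_t(d) = α_0(d) for all d ∈ D' and all t), and let B = { α_0(d) : d ∈ D' } be the set of vertices they occupy. Then for every agent a ∉ D' and every time step t, the vertex α_t(a) lies outside B and is reachable from α_0(a) inside the subgraph of G induced on V \ B. -/

import Mathlib

/-- Configuration `β` is obtained from configuration `α` by a legal joint move in the
APP movement model on graph `G`:
(i) each agent stays or moves to an adjacent vertex;
(ii) an agent may move into a vertex currently occupied by another agent only if that
agent vacates it at the same step;
(iii) no pair of agents swaps across an edge;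
(iv) no two moving agents enter the same vertex. -/
def LegalMove {V R : Type*} (G : SimpleGraph V) (α β : R → V) : Prop :=
  (∀ r, β r = α r ∨ G.Adj (α r) (β r)) ∧
  (∀ r s, r ≠ s → β r ≠ α r → β r = α s → β s ≠ α s) ∧
  (∀ r s, r ≠ s → ¬(β r = α s ∧ β s = α r)) ∧
  (∀ r s, r ≠ s → β r ≠ α r → β s ≠ α s → β r ≠ β s)

/-- A play in the APP movement model: the initial configuration is injective and each
successive configuration is obtained by a legal joint move. -/
def IsPlay {V R : Type*} (G : SimpleGraph V) (α : ℕ → R → V) : Prop :=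
  Function.Injective (α 0) ∧ ∀ t, LegalMove G (α t) (α (t + 1))

/-- The subgraph of `G` induced on `V \ B`: edges of `G` with both endpoints outside `B`. -/
def avoidGraph {V : Type*} (G : SimpleGraph V) (B : Set V) : SimpleGraph V where
  Adj u v := G.Adj u v ∧ u ∉ B ∧ v ∉ B
  symm := ⟨fun u v ⟨huv, hu, hv⟩ => ⟨huv.symm, hv, hu⟩⟩
  loopless := ⟨fun v ⟨hvv, _, _⟩ => G.loopless.irrefl v hvv⟩

/-- Stationary-defender blocking invariant: if the agents in `D'` never move and `B` is
the set of vertices they occupy, then every other agent always stays outside `B` and is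
reachable from its initial position inside the subgraph of `G` induced on `V \ B`. -/
theorem stationary_defender_blocking {V R : Type*} [Fintype R]
    (G : SimpleGraph V) (α : ℕ → R → V) (h : IsPlay G α)
    (D' : Set R) (hstat : ∀ d ∈ D', ∀ t, α t d = α 0 d)
    (B : Set V) (hB : B = α 0 '' D')
    (a : R) (ha : a ∉ D') (t : ℕ) :
    α t a ∉ B ∧ (avoidGraph G B).Reachable (α 0 a) (α t a) := by
  subst hB
  induction t with
  | zero =>
    constructor
    · rintro ⟨d, hd, hda⟩
      exact ha (h.1 hda ▸ hd)
    · exact SimpleGraph.Reachable.refl _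
  | succ t ih =>
    have hnotB : α (t + 1) a ∉ α 0 '' D' := by
      rintro ⟨d, hd, hda⟩
      have had : a ≠ d := fun e => ha (e ▸ hd)
      by_cases hmove : α (t + 1) a = α t a
      · exact ih.1 ⟨d, hd, hmove ▸ hda⟩
      · have hdB : α (t + 1) a = α t d := by rw [hstat d hd t, hda]
        have := (h.2 t).2.1 a d had hmove hdB
        exact this (by rw [hstat d hd (t+1), hstat d hd t])
    refine ⟨hnotB, ?_⟩
    by_cases hmove : α (t + 1) a = α t a
    · rw [hmove]; exact ih.2
    · refine ih.2.trans (SimpleGraph.Adj.reachable ?_)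
      rcases (h.2 t).1 a with h1 | h1
      · exact absurd h1 hmove
      · exact ⟨h1, ih.1, hnotB⟩
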